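/- Let τ and τ' be finitely supported Bayes-plausible distributions over posteriors on a finite set Ω with common prior μ₀ (i.e., barycenter μ₀). If τ is a mean-preserving spread of τ' and τ' is a mean-preserving spread of τ, and additionally every atom of τ and τ' is an extreme point of conv(supp(τ) ∪ supp(τ')), then τ = τ'. More simply: if τ ⪰ τ' via kernel K and τ' ⪰ τ via kernel K', and supp(τ) consists of points that are extreme in conv(supp(τ')), then τ = τ'. -/

import Mathlib

open Finset

open scoped Classical in
/-- If an extreme point of the convex hull of `s` is written as a finite convex combination of
points of `s`, then every point with positive weight equals it. -/
theorem extreme_comb_aux {E : Type*} [AddCommGroup E] [Module ℝ E] {ι : Type*} [Fintype ι]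
    {s : Set E} {e : E} (he : e ∈ Set.extremePoints ℝ (convexHull ℝ s))
    (t : ι → ℝ) (htnn : ∀ i, 0 ≤ t i) (ht1 : ∑ i, t i = 1) (x : ι → E) (hx : ∀ i, x i ∈ s)
    (hsum : ∑ i, t i • x i = e) : ∀ i, 0 < t i → x i = e := by
  intro i0 hi0
  by_cases h1 : t i0 = 1
  · -- all other weights are zero
    have hzero : ∀ i ∈ Finset.univ, i ≠ i0 → t i • x i = 0 := by
      intro i _ hne
      have : ∑ i ∈ Finset.univ.erase i0, t i = 0 := by
        have := Finset.add_sum_erase Finset.univ t (Finset.mem_univ i0)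
        rw [ht1, h1] at this
        linarith
      have hti : t i = 0 :=
        (Finset.sum_eq_zero_iff_of_nonneg (fun i _ => htnn i)).mp this i
          (Finset.mem_erase.mpr ⟨hne, Finset.mem_univ i⟩)
      simp [hti]
    have : ∑ i, t i • x i = t i0 • x i0 :=
      Finset.sum_eq_single i0 (fun i hi hne => hzero i hi hne) (by simp)
    rw [this, h1, one_smul] at hsum
    exact hsum
  · have hlt : t i0 < 1 := lt_of_le_of_ne (by
      by_contra h
      push_neg at h
      have : ∑ i, t i > 1 := by
        calc 1 < t i0 := h
        _ = ∑ i ∈ {i0}, t i := by simp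
        _ ≤ ∑ i, t i := Finset.sum_le_sum_of_subset_of_nonneg (Finset.subset_univ _)
            (fun i _ _ => htnn i)
      linarith) h1
    set c : ℝ := 1 - t i0 with hc
    have hcpos : 0 < c := by simp [hc]; linarith
    set u : ι → ℝ := fun i => if i = i0 then 0 else t i / c with hu
    have herase : ∑ i ∈ Finset.univ.erase i0, t i = c := by
      have := Finset.add_sum_erase Finset.univ t (Finset.mem_univ i0)
      rw [ht1] at this
      simp only [hc]; linarith
    have husum : ∑ i, u i = 1 := by
      calc ∑ i, u i = u i0 + ∑ i ∈ Finset.univ.erase i0, u i :=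
            (Finset.add_sum_erase Finset.univ u (Finset.mem_univ i0)).symm
        _ = ∑ i ∈ Finset.univ.erase i0, t i / c := by
            rw [show u i0 = 0 by simp [hu], zero_add]
            exact Finset.sum_congr rfl fun i hi => by
              simp [hu, (Finset.mem_erase.mp hi).1]
        _ = c / c := by rw [← Finset.sum_div, herase]
        _ = 1 := div_self hcpos.ne'
    set y : E := ∑ i, u i • x i with hy
    have hymem : y ∈ convexHull ℝ s := by
      apply (convex_convexHull ℝ s).sum_mem
      · intro i _
        by_cases h : i = i0
        · simp [hu, h]
        · simp only [hu, h, if_neg, if_false]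
          exact div_nonneg (htnn i) hcpos.le
      · exact husum
      · intro i _
        exact subset_convexHull ℝ s (hx i)
    have hx0mem : x i0 ∈ convexHull ℝ s := subset_convexHull ℝ s (hx i0)
    have hseg : e ∈ openSegment ℝ (x i0) y := by
      refine ⟨t i0, c, hi0, hcpos, by simp [hc], ?_⟩
      rw [hy, Finset.smul_sum]
      have : ∀ i ∈ Finset.univ, c • u i • x i = (if i = i0 then 0 else t i • x i) := by
        intro i _
        by_cases h : i = i0
        · simp [hu, h]
        · simp only [hu, h, if_neg, if_false]
          rw [smul_smul]
          congr 1
          field_simp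
      rw [Finset.sum_congr rfl this]
      rw [← hsum]
      have h2 : ∑ i, (if i = i0 then (0:E) else t i • x i)
          = ∑ i ∈ Finset.univ.erase i0, t i • x i := by
        calc ∑ i, (if i = i0 then (0:E) else t i • x i)
            = (if i0 = i0 then (0:E) else t i0 • x i0)
              + ∑ i ∈ Finset.univ.erase i0, (if i = i0 then (0:E) else t i • x i) :=
              (Finset.add_sum_erase Finset.univ _ (Finset.mem_univ i0)).symm
          _ = ∑ i ∈ Finset.univ.erase i0, t i • x i := by
              rw [if_pos rfl, zero_add]
              exact Finset.sum_congr rfl fun i hi => if_neg (Finset.mem_erase.mp hi).1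
      rw [h2]
      exact Finset.add_sum_erase Finset.univ (fun i => t i • x i) (Finset.mem_univ i0)
    exact he.2 hx0mem hymem hseg

open scoped Classical in
/-- Antisymmetry of the Blackwell order modulo equivalence: if τ and τ' are mutual
mean-preserving spreads of each other with common barycenter μ₀, and every atom of τ is an
extreme point of the convex hull of the support of τ', then τ = τ' as distributions. -/
theorem stmt_15 {Ω : Type*} [Fintype Ω]
    (μ₀ : Ω → ℝ)
    (K K' : ℕ) (w : Fin K → ℝ) (μ : Fin K → Ω → ℝ)
    (w' : Fin K' → ℝ) (μ' : Fin K' → Ω → ℝ)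
    (hwpos : ∀ j, 0 < w j) (hwone : ∑ j, w j = 1)
    (hw'pos : ∀ i, 0 < w' i) (hw'one : ∑ i, w' i = 1)
    (hbary : ∑ j, w j • μ j = μ₀) (hbary' : ∑ i, w' i • μ' i = μ₀)
    (K1 : Fin K' → Fin K → ℝ)
    (hK1nn : ∀ i j, 0 ≤ K1 i j) (hK1one : ∀ i, ∑ j, K1 i j = 1)
    (hK1bary : ∀ i, ∑ j, K1 i j • μ j = μ' i)
    (hK1mix : ∀ j, w j = ∑ i, w' i * K1 i j)
    (K2 : Fin K → Fin K' → ℝ)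
    (hK2nn : ∀ j i, 0 ≤ K2 j i) (hK2one : ∀ j, ∑ i, K2 j i = 1)
    (hK2bary : ∀ j, ∑ i, K2 j i • μ' i = μ j)
    (hK2mix : ∀ i, w' i = ∑ j, w j * K2 j i)
    (hext : ∀ j, μ j ∈ Set.extremePoints ℝ (convexHull ℝ (Set.range μ'))) :
    ∀ x : Ω → ℝ,
      (∑ j ∈ Finset.univ.filter (fun j => μ j = x), w j) =
      (∑ i ∈ Finset.univ.filter (fun i => μ' i = x), w' i) := by
  have key : ∀ j i, 0 < K2 j i → μ' i = μ j := fun j i h =>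
    extreme_comb_aux (hext j) (K2 j) (hK2nn j) (hK2one j) μ'
      (fun i => Set.mem_range_self i) (hK2bary j) i h
  intro x
  have hrhs : (∑ i ∈ Finset.univ.filter (fun i => μ' i = x), w' i)
      = ∑ j, w j * ∑ i ∈ Finset.univ.filter (fun i => μ' i = x), K2 j i := by
    rw [Finset.sum_congr rfl (fun i _ => hK2mix i)]
    rw [Finset.sum_comm]
    apply Finset.sum_congr rfl
    intro j _
    rw [Finset.mul_sum]
  rw [hrhs]
  have hinner : ∀ j, (∑ i ∈ Finset.univ.filter (fun i => μ' i = x), K2 j i)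
      = if μ j = x then 1 else 0 := by
    intro j
    by_cases h : μ j = x
    · rw [if_pos h, ← hK2one j]
      apply Finset.sum_subset (Finset.subset_univ _)
      intro i _ hi
      simp only [Finset.mem_filter, Finset.mem_univ, true_and] at hi
      by_contra hne
      have hpos : 0 < K2 j i := lt_of_le_of_ne (hK2nn j i) (Ne.symm hne)
      exact hi ((key j i hpos).trans h)
    · rw [if_neg h]
      apply Finset.sum_eq_zero
      intro i hi
      simp only [Finset.mem_filter, Finset.mem_univ, true_and] at hi
      by_contra hne
      have hpos : 0 < K2 j i := lt_of_le_of_ne (hK2nn j i) (Ne.symm hne)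
      exact h ((key j i hpos).symm.trans hi)
  have hfin : ∑ j, w j * ∑ i ∈ Finset.univ.filter (fun i => μ' i = x), K2 j i
      = ∑ j, w j * (if μ j = x then 1 else 0) :=
    Finset.sum_congr rfl fun j _ => by rw [hinner j]
  rw [hfin]
  simp [Finset.sum_filter, mul_ite]
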